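/- Let f be holomorphic near 0 ∈ ℂ with f(0)=0 and multiplier a₁ = f'(0) satisfying 0 < |a₁| < 1. Then the sequence φ_k = f^k / a₁^k converges uniformly on a sufficiently small disk around 0 to a holomorphic map φ with φ(0)=0, φ'(0)=1, satisfying φ ∘ f = a₁ · φ. -/

import Mathlib

open Metric Filter

set_option maxHeartbeats 1000000

private lemma koenigs_aux_bigO (f : ℂ → ℂ) (a₁ : ℂ) (hf : AnalyticAt ℂ f 0)
    (hf0 : f 0 = 0) (ha : a₁ = deriv f 0) :
    (fun z => f z - a₁ * z) =O[nhds 0] fun z => ‖z‖ ^ 2 := by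
  obtain ⟨p, hp⟩ := hf
  have h := hp.isBigO_sub_partialSum_pow 2
  simp only [zero_add] at h
  have hps : ∀ y : ℂ, p.partialSum 2 y = a₁ * y := by
    intro y
    have h0 : p 0 (fun _ => y) = f 0 := hp.coeff_zero _
    have h1 : p 1 (fun _ => y) = y * (p 1 fun _ => 1) := by
      rw [FormalMultilinearSeries.apply_eq_pow_smul_coeff, FormalMultilinearSeries.coeff]
      rw [pow_one, smul_eq_mul]
      norm_num
    rw [FormalMultilinearSeries.partialSum, Finset.sum_range_succ, Finset.sum_range_one,
      h0, hf0, h1, ← hp.deriv, ← ha]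
    ring
  refine h.congr' ?_ (by rfl)
  filter_upwards with y
  rw [hps]

/-- Kœnigs linearization. If `f` is holomorphic near `0`, `f 0 = 0` and the
multiplier `a₁ = f'(0)` satisfies `0 < |a₁| < 1`, then `φ_k = f^[k] / a₁^k` converges
uniformly on a small disk to a holomorphic `φ` with `φ 0 = 0`, `φ'(0) = 1` and
`φ ∘ f = a₁ • φ` there. -/
theorem koenigs_linearization (f : ℂ → ℂ) (a₁ : ℂ)
    (hf : AnalyticAt ℂ f 0) (hf0 : f 0 = 0) (ha : a₁ = deriv f 0)
    (h0 : 0 < ‖a₁‖) (h1 : ‖a₁‖ < 1) :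
    ∃ ε > (0 : ℝ), ∃ φ : ℂ → ℂ,
      TendstoUniformlyOn (fun k z => f^[k] z / a₁ ^ k) φ atTop (ball (0 : ℂ) ε) ∧
      AnalyticOnNhd ℂ φ (ball (0 : ℂ) ε) ∧
      φ 0 = 0 ∧ deriv φ 0 = 1 ∧
      ∀ z ∈ ball (0 : ℂ) ε, φ (f z) = a₁ * φ z := by
  have ha0 : a₁ ≠ 0 := by
    intro h; rw [h] at h0; simp at h0
  -- quadratic bound near 0
  obtain ⟨C, hC0, hCb⟩ := (koenigs_aux_bigO f a₁ hf hf0 ha).exists_pos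
  rw [Asymptotics.isBigOWith_iff] at hCb
  obtain ⟨r, hr0, hrC⟩ := Metric.eventually_nhds_iff.mp hCb
  -- analyticity near 0
  obtain ⟨r₂, hr₂0, hr₂⟩ := Metric.eventually_nhds_iff.mp hf.eventually_analyticAt
  -- constants
  obtain ⟨c, hc1, hq1, hcs, hc0⟩ :
      ∃ c : ℝ, ‖a₁‖ < c ∧ c ^ 2 < ‖a₁‖ ∧ c < 1 ∧ 0 < c := by
    set s : ℝ := Real.sqrt ‖a₁‖ with hs
    have hs0 : 0 < s := Real.sqrt_pos.mpr h0
    have hssq : s ^ 2 = ‖a₁‖ := Real.sq_sqrt h0.le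
    have hs1 : s < 1 := by nlinarith [hssq]
    have hsa : ‖a₁‖ < s := by nlinarith [hssq]
    exact ⟨(‖a₁‖ + s) / 2, by linarith, by nlinarith, by linarith, by linarith⟩
  -- the radius
  obtain ⟨ε, hε0, hεr, hεr₂, hεC⟩ :
      ∃ ε : ℝ, 0 < ε ∧ ε ≤ r ∧ ε ≤ r₂ ∧ C * ε ≤ c - ‖a₁‖ := by
    refine ⟨min (min r r₂) ((c - ‖a₁‖) / C), ?_, ?_, ?_, ?_⟩
    · exact lt_min (lt_min hr0 hr₂0) (div_pos (by linarith) hC0)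
    · exact le_trans (min_le_left _ _) (min_le_left _ _)
    · exact le_trans (min_le_left _ _) (min_le_right _ _)
    · have h' : min (min r r₂) ((c - ‖a₁‖) / C) ≤ (c - ‖a₁‖) / C := min_le_right _ _
      rw [le_div_iff₀ hC0] at h'
      linarith
  refine ⟨ε, hε0, ?_⟩
  -- quadratic bound on the ball
  have hquad : ∀ z ∈ ball (0 : ℂ) ε, ‖f z - a₁ * z‖ ≤ C * ‖z‖ ^ 2 := by
    intro z hz
    have hd : dist z 0 < r := lt_of_lt_of_le (mem_ball.mp hz) hεr
    have := hrC hd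
    simpa [abs_of_nonneg (sq_nonneg ‖z‖)] using this
  -- f is contracting on the ball
  have hmap : ∀ z ∈ ball (0 : ℂ) ε, ‖f z‖ ≤ c * ‖z‖ := by
    intro z hz
    have hzε : ‖z‖ < ε := by simpa [dist_eq_norm] using mem_ball.mp hz
    have hz0 : (0:ℝ) ≤ ‖z‖ := norm_nonneg z
    calc ‖f z‖ = ‖a₁ * z + (f z - a₁ * z)‖ := by ring_nf
      _ ≤ ‖a₁ * z‖ + ‖f z - a₁ * z‖ := norm_add_le _ _
      _ ≤ ‖a₁‖ * ‖z‖ + C * ‖z‖ ^ 2 := by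
          rw [norm_mul]; exact add_le_add le_rfl (hquad z hz)
      _ ≤ ‖a₁‖ * ‖z‖ + (C * ε) * ‖z‖ := by
          have h2 : ‖z‖ * ‖z‖ ≤ ε * ‖z‖ := mul_le_mul_of_nonneg_right hzε.le hz0
          nlinarith [mul_le_mul_of_nonneg_left h2 hC0.le]
      _ ≤ c * ‖z‖ := by nlinarith
  have hmapb : ∀ z ∈ ball (0 : ℂ) ε, f z ∈ ball (0 : ℂ) ε := by
    intro z hz
    have hzε : ‖z‖ < ε := by simpa [dist_eq_norm] using mem_ball.mp hz
    have := hmap z hz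
    rw [mem_ball, dist_eq_norm, sub_zero]
    nlinarith [norm_nonneg z]
  -- iterates stay in ball and decay
  have hiter : ∀ k, ∀ z ∈ ball (0 : ℂ) ε,
      f^[k] z ∈ ball (0 : ℂ) ε ∧ ‖f^[k] z‖ ≤ c ^ k * ‖z‖ := by
    intro k
    induction k with
    | zero => intro z hz; simpa using hz
    | succ n ih =>
      intro z hz
      obtain ⟨hm, hn⟩ := ih z hz
      constructor
      · rw [Function.iterate_succ_apply']
        exact hmapb _ hm
      · rw [Function.iterate_succ_apply']
        calc ‖f (f^[n] z)‖ ≤ c * ‖f^[n] z‖ := hmap _ hm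
          _ ≤ c * (c ^ n * ‖z‖) := by nlinarith
          _ = c ^ (n+1) * ‖z‖ := by ring
  -- the telescoping differences
  set d : ℕ → ℂ → ℂ := fun k z => f^[k+1] z / a₁ ^ (k+1) - f^[k] z / a₁ ^ k with hd
  set q : ℝ := c ^ 2 / ‖a₁‖ with hqdef
  have hq0 : 0 ≤ q := div_nonneg (sq_nonneg c) h0.le
  have hqlt : q < 1 := (div_lt_one h0).mpr hq1
  set u : ℕ → ℝ := fun k => C * ε ^ 2 / ‖a₁‖ * q ^ k with hu
  have hsu : Summable u := (summable_geometric_of_lt_one hq0 hqlt).mul_left _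
  have hdb : ∀ k, ∀ z ∈ ball (0 : ℂ) ε, ‖d k z‖ ≤ u k := by
    intro k z hz
    obtain ⟨hm, hn⟩ := hiter k z hz
    have hzε : ‖z‖ < ε := by simpa [dist_eq_norm] using mem_ball.mp hz
    have key : d k z = (f (f^[k] z) - a₁ * f^[k] z) / a₁ ^ (k+1) := by
      rw [hd]
      simp only
      rw [Function.iterate_succ_apply']
      field_simp
      ring
    rw [key, norm_div, norm_pow]
    have hnum : ‖f (f^[k] z) - a₁ * f^[k] z‖ ≤ C * (c ^ k * ‖z‖) ^ 2 := by
      refine le_trans (hquad _ hm) ?_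
      have hw0 := norm_nonneg (f^[k] z)
      nlinarith [mul_le_mul_of_nonneg_left (mul_self_le_mul_self hw0 hn) hC0.le]
    have hden : (0:ℝ) < ‖a₁‖ ^ (k+1) := pow_pos h0 _
    rw [div_le_iff₀ hden]
    calc ‖f (f^[k] z) - a₁ * f^[k] z‖ ≤ C * (c ^ k * ‖z‖) ^ 2 := hnum
      _ ≤ C * (c ^ k * ε) ^ 2 := by
          have h1 : (0:ℝ) ≤ c ^ k := pow_nonneg hc0.le _
          have h2 : (0:ℝ) ≤ ‖z‖ := norm_nonneg _
          have h3 : c ^ k * ‖z‖ ≤ c ^ k * ε := mul_le_mul_of_nonneg_left hzε.le h1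
          have h4 : (0:ℝ) ≤ c ^ k * ‖z‖ := mul_nonneg h1 h2
          nlinarith [mul_le_mul_of_nonneg_left (mul_self_le_mul_self h4 h3) hC0.le]
      _ = u k * ‖a₁‖ ^ (k+1) := by
          rw [hu, hqdef]
          simp only
          rw [div_pow, div_mul_div_comm,
            show (‖a₁‖:ℝ) ^ (k+1) = ‖a₁‖ * ‖a₁‖ ^ k from pow_succ' _ _,
            div_mul_cancel₀ _ (mul_ne_zero h0.ne' (pow_ne_zero k h0.ne'))]
          ring
  -- uniform convergence
  set φ : ℂ → ℂ := fun z => z + ∑' k, d k z with hφ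
  have htsum := tendstoUniformlyOn_tsum_nat hsu (fun k x hx => hdb k x hx)
  have hid : TendstoUniformlyOn (fun (_ : ℕ) (z : ℂ) => z) (fun z => z) atTop
      (ball (0 : ℂ) ε) := fun v hv =>
    Eventually.of_forall fun n x _ => refl_mem_uniformity hv
  have htu : TendstoUniformlyOn (fun k z => f^[k] z / a₁ ^ k) φ atTop (ball (0 : ℂ) ε) := by
    have h' := hid.add htsum
    refine h'.congr ?_
    filter_upwards with k
    intro z hz
    simp only [Pi.add_apply]
    have htel : ∑ i ∈ Finset.range k, d i z = f^[k] z / a₁ ^ k - z := by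
      rw [hd]
      rw [Finset.sum_range_sub (f := fun i => f^[i] z / a₁ ^ i)]
      simp
    rw [htel]
    ring
  refine ⟨φ, htu, ?_, ?_, ?_, ?_⟩
  -- analyticity
  · have hfd : ∀ z ∈ ball (0 : ℂ) ε, DifferentiableAt ℂ f z := fun z hz =>
      (hr₂ (lt_of_lt_of_le (mem_ball.mp hz) hεr₂)).differentiableAt
    have hiterd : ∀ k, DifferentiableOn ℂ (f^[k]) (ball (0 : ℂ) ε) := by
      intro k
      induction k with
      | zero => simpa using differentiableOn_id
      | succ n ih =>
        rw [Function.iterate_succ]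
        exact DifferentiableOn.comp ih (fun z hz => (hfd z hz).differentiableWithinAt) hmapb
    have hF : ∀ k, DifferentiableOn ℂ (fun z => f^[k] z / a₁ ^ k) (ball (0 : ℂ) ε) :=
      fun k => (hiterd k).div_const _
    exact ((htu.tendstoLocallyUniformlyOn.differentiableOn
      (Eventually.of_forall hF) isOpen_ball).analyticOnNhd isOpen_ball)
  -- φ 0 = 0
  · have h0m : (0 : ℂ) ∈ ball (0 : ℂ) ε := mem_ball_self hε0
    have t1 := htu.tendsto_at h0m
    have t2 : Tendsto (fun k : ℕ => f^[k] (0:ℂ) / a₁ ^ k) atTop (nhds 0) := by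
      have : ∀ k : ℕ, f^[k] (0:ℂ) / a₁ ^ k = 0 := by
        intro k; rw [Function.iterate_fixed hf0]; simp
      simpa [this] using (tendsto_const_nhds : Tendsto (fun _ : ℕ => (0:ℂ)) atTop (nhds 0))
    exact tendsto_nhds_unique t1 t2
  -- deriv φ 0 = 1
  · have hfd : ∀ z ∈ ball (0 : ℂ) ε, DifferentiableAt ℂ f z := fun z hz =>
      (hr₂ (lt_of_lt_of_le (mem_ball.mp hz) hεr₂)).differentiableAt
    have hiterd : ∀ k, DifferentiableOn ℂ (f^[k]) (ball (0 : ℂ) ε) := by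
      intro k
      induction k with
      | zero => simpa using differentiableOn_id
      | succ n ih =>
        rw [Function.iterate_succ]
        exact DifferentiableOn.comp ih (fun z hz => (hfd z hz).differentiableWithinAt) hmapb
    have hF : ∀ k, DifferentiableOn ℂ (fun z => f^[k] z / a₁ ^ k) (ball (0 : ℂ) ε) :=
      fun k => (hiterd k).div_const _
    have hderconv := (htu.tendstoLocallyUniformlyOn.deriv
      (Eventually.of_forall hF) isOpen_ball)
    have h0m : (0 : ℂ) ∈ ball (0 : ℂ) ε := mem_ball_self hε0
    have t1 := hderconv.tendsto_at h0m
    have hkder : ∀ k : ℕ, f^[k] 0 = 0 ∧ DifferentiableAt ℂ (f^[k]) 0 ∧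
        deriv (f^[k]) 0 = a₁ ^ k := by
      intro k
      induction k with
      | zero => refine ⟨rfl, differentiableAt_id, ?_⟩; simp
      | succ n ih =>
        obtain ⟨ih0, ihd, ihder⟩ := ih
        have hdf : DifferentiableAt ℂ f (f^[n] 0) := by
          rw [ih0]; exact hf.differentiableAt
        refine ⟨?_, ?_, ?_⟩
        · rw [Function.iterate_succ_apply', ih0, hf0]
        · rw [Function.iterate_succ']
          exact DifferentiableAt.comp 0 hdf ihd
        · rw [Function.iterate_succ']
          rw [deriv_comp (x := 0) hdf ihd]
          rw [ih0, ← ha, ihder]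
          ring
    have t2 : Tendsto (fun k : ℕ => deriv (fun z => f^[k] z / a₁ ^ k) 0) atTop (nhds 1) := by
      have heq : ∀ k : ℕ, deriv (fun z => f^[k] z / a₁ ^ k) 0 = 1 := by
        intro k
        obtain ⟨_, _, hder⟩ := hkder k
        rw [deriv_div_const, hder]
        exact div_self (pow_ne_zero _ ha0)
      simpa [heq] using (tendsto_const_nhds : Tendsto (fun _ : ℕ => (1:ℂ)) atTop (nhds 1))
    exact tendsto_nhds_unique t1 t2
  -- functional equation
  · intro z hz
    have hz' := hmapb z hz
    have t1 : Tendsto (fun k : ℕ => f^[k] (f z) / a₁ ^ k) atTop (nhds (φ (f z))) :=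
      htu.tendsto_at hz'
    have t2 : Tendsto (fun k : ℕ => f^[k+1] z / a₁ ^ (k+1)) atTop (nhds (φ z)) :=
      (htu.tendsto_at hz).comp (tendsto_add_atTop_nat 1)
    have t3 : Tendsto (fun k : ℕ => a₁ * (f^[k+1] z / a₁ ^ (k+1))) atTop
        (nhds (a₁ * φ z)) := t2.const_mul a₁
    refine tendsto_nhds_unique (t1.congr ?_) t3
    intro k
    rw [← Function.iterate_succ_apply]
    field_simp
    ring
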